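/- Let T be a finite tree on m ≥ 2 vertices in which every vertex has degree at most 3. Then T has an edge e such that each of the two connected components obtained by deleting e from T has at most ⌊(2m+1)/3⌋ vertices (equivalently, each of the two components has at least ⌈(m−1)/3⌉ vertices). -/

import Mathlib

open SimpleGraph

namespace TreeBalancedAux

variable {V : Type*} [Fintype V] [DecidableEq V]

/-- Size of the component of `b` after deleting the edge `ab`. -/
noncomputable def sz (G : SimpleGraph V) (a b : V) : ℕ :=
  ((G.deleteEdges {s(a, b)}).connectedComponentMk b).supp.ncard

lemma reach_aux {G : SimpleGraph V} {u v : V} :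
    ∀ {a b : V} (_ : G.Walk a b),
      (G.deleteEdges {s(u,v)}).Reachable a b ∨
      (G.deleteEdges {s(u,v)}).Reachable a u ∨
      (G.deleteEdges {s(u,v)}).Reachable a v := by
  intro a b p
  induction p with
  | nil => exact Or.inl (Reachable.refl _)
  | @cons a x b h q ih =>
    by_cases he : s(a, x) = s(u, v)
    · rw [Sym2.eq_iff] at he
      rcases he with ⟨rfl, rfl⟩ | ⟨rfl, rfl⟩
      · exact Or.inr (Or.inl (Reachable.refl _))
      · exact Or.inr (Or.inr (Reachable.refl _))
    · have hax : (G.deleteEdges {s(u,v)}).Adj a x :=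
        deleteEdges_adj.mpr ⟨h, by simpa using he⟩
      rcases ih with h1 | h1 | h1
      · exact Or.inl (hax.reachable.trans h1)
      · exact Or.inr (Or.inl (hax.reachable.trans h1))
      · exact Or.inr (Or.inr (hax.reachable.trans h1))

lemma reach_cover {G : SimpleGraph V} (hc : G.Connected) (u v w : V) :
    (G.deleteEdges {s(u,v)}).Reachable w u ∨ (G.deleteEdges {s(u,v)}).Reachable w v := by
  obtain ⟨p⟩ := hc w u
  rcases reach_aux (u := u) (v := v) p with h | h | h
  · exact Or.inl h
  · exact Or.inl h
  · exact Or.inr h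

lemma not_reach_del {G : SimpleGraph V} (hT : G.IsTree) {u v : V} (huv : G.Adj u v) :
    ¬ (G.deleteEdges {s(u,v)}).Reachable u v := by
  have hb := (isAcyclic_iff_forall_adj_isBridge.mp hT.IsAcyclic) huv
  rw [isBridge_iff] at hb
  exact hb

lemma sz_add {G : SimpleGraph V} (hT : G.IsTree) {u v : V} (huv : G.Adj u v) :
    sz G u v + sz G v u = Fintype.card V := by
  classical
  have hswap : s(v, u) = s(u, v) := Sym2.eq_swap
  set G' := G.deleteEdges {s(u,v)} with hG'
  have hszvu : sz G v u = (G'.connectedComponentMk u).supp.ncard := by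
    unfold sz; rw [hswap]
  have hdisj : Disjoint (G'.connectedComponentMk v).supp (G'.connectedComponentMk u).supp := by
    rw [Set.disjoint_left]
    intro x hx1 hx2
    rw [ConnectedComponent.mem_supp_iff] at hx1 hx2
    exact not_reach_del hT huv ((ConnectedComponent.eq).mp (hx2.symm.trans hx1))
  have hunion : (G'.connectedComponentMk v).supp ∪ (G'.connectedComponentMk u).supp =
      Set.univ := by
    ext w
    simp only [Set.mem_union, Set.mem_univ, iff_true, ConnectedComponent.mem_supp_iff]
    rcases reach_cover hT.isConnected u v w with h | h
    · exact Or.inr ((ConnectedComponent.eq).mpr h)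
    · exact Or.inl ((ConnectedComponent.eq).mpr h)
  have hcard := Set.ncard_union_eq hdisj (Set.toFinite _) (Set.toFinite _)
  rw [hunion, Set.ncard_univ, Nat.card_eq_fintype_card] at hcard
  have hszuv : sz G u v = (G'.connectedComponentMk v).supp.ncard := rfl
  rw [hszuv, hszvu, hcard]

lemma sym2_ne {G : SimpleGraph V} {u v w : V} (huv : G.Adj u v) (hwu : w ≠ u) :
    s(v, w) ≠ s(u, v) := by
  intro h
  rw [Sym2.eq_iff] at h
  rcases h with ⟨rfl, rfl⟩ | ⟨h1, rfl⟩
  · exact huv.ne rfl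
  · exact hwu rfl

/-- If `uv` and `vw` are edges of a tree with `w ≠ u`, then everything reachable from `w`
after deleting `vw` is reachable from `v` after deleting `uv`, and is not `v` itself. -/
lemma supp_shrink {G : SimpleGraph V} (hT : G.IsTree) {u v w : V}
    (huv : G.Adj u v) (hvw : G.Adj v w) (hwu : w ≠ u) {x : V}
    (hx : (G.deleteEdges {s(v,w)}).Reachable x w) :
    (G.deleteEdges {s(u,v)}).Reachable x v ∧ x ≠ v := by
  have hxv : x ≠ v := by
    rintro rfl
    exact not_reach_del hT hvw hx
  refine ⟨?_, hxv⟩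
  obtain ⟨p0⟩ := hx
  obtain ⟨pw, hpw⟩ := p0.toPath
  have hedge : ∀ e ∈ pw.edges, e ∈ G.edgeSet ∧ e ≠ s(v, w) := by
    intro e he
    have h1 := pw.edges_subset_edgeSet he
    rw [edgeSet_deleteEdges] at h1
    exact ⟨h1.1, by simpa using h1.2⟩
  let q : G.Walk x w := pw.transfer G (fun e he => (hedge e he).1)
  have hq_path : q.IsPath := hpw.transfer _
  have hq_edges : q.edges = pw.edges := pw.edges_transfer _
  have hv_not : v ∉ q.support := by
    intro hv
    have hq2 : (q.dropUntil v hv).IsPath := hq_path.dropUntil hv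
    obtain ⟨pp, _, huniq⟩ := hT.existsUnique_path v w
    have h1 := huniq _ hq2
    have h2 := huniq _ (Path.singleton hvw).2
    have hmem : s(v, w) ∈ (q.dropUntil v hv).edges := by
      rw [h1, ← h2]
      simp [Path.singleton]
    have := q.edges_dropUntil_subset hv hmem
    rw [hq_edges] at this
    exact (hedge _ this).2 rfl
  have hsuv : ∀ e ∈ q.edges, e ∈ (G.deleteEdges {s(u,v)}).edgeSet := by
    intro e he
    rw [edgeSet_deleteEdges]
    refine ⟨q.edges_subset_edgeSet he, ?_⟩
    simp only [Set.mem_singleton_iff]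
    rintro rfl
    exact hv_not (q.snd_mem_support_of_mem_edges he)
  have hreach : (G.deleteEdges {s(u,v)}).Reachable x w := ⟨q.transfer _ hsuv⟩
  have hadj : (G.deleteEdges {s(u,v)}).Adj v w :=
    deleteEdges_adj.mpr ⟨hvw, by simpa using sym2_ne huv hwu⟩
  exact hreach.trans hadj.symm.reachable

/-- Everything in the `v`-side component other than `v` lies in the `w`-side component
of some edge `vw` with `w ≠ u`. -/
lemma exists_neighbor {G : SimpleGraph V} (hT : G.IsTree) {u v : V} (huv : G.Adj u v)
    {x : V} (hx : (G.deleteEdges {s(u,v)}).Reachable x v) (hxv : x ≠ v) :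
    ∃ w, G.Adj v w ∧ w ≠ u ∧ (G.deleteEdges {s(v,w)}).Reachable x w := by
  obtain ⟨p0⟩ := hx.symm
  obtain ⟨p, hp⟩ := p0.toPath
  cases p with
  | nil => exact absurd rfl hxv.symm
  | @cons _ w _ h q =>
    rw [Walk.cons_isPath_iff] at hp
    have hvw : G.Adj v w := (deleteEdges_adj.mp h).1
    have hne : s(v, w) ∉ ({s(u,v)} : Set (Sym2 V)) := (deleteEdges_adj.mp h).2
    have hwu : w ≠ u := by
      rintro rfl
      exact hne (by rw [Sym2.eq_swap]; rfl)
    refine ⟨w, hvw, hwu, ?_⟩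
    have hedges : ∀ e ∈ q.edges, e ∈ (G.deleteEdges {s(v,w)}).edgeSet := by
      intro e he
      rw [edgeSet_deleteEdges]
      have h1 := q.edges_subset_edgeSet he
      rw [edgeSet_deleteEdges] at h1
      refine ⟨h1.1, ?_⟩
      simp only [Set.mem_singleton_iff]
      rintro rfl
      exact hp.2 (q.fst_mem_support_of_mem_edges he)
    exact ⟨(q.transfer _ hedges).reverse⟩

lemma ncard_biUnion_le {α : Type*} (s : Finset α) (f : α → Set V) :
    (⋃ a ∈ s, f a).ncard ≤ ∑ a ∈ s, (f a).ncard := by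
  classical
  induction s using Finset.induction_on with
  | empty => simp
  | @insert a t ha ih =>
    rw [Finset.set_biUnion_insert, Finset.sum_insert ha]
    exact le_trans (Set.ncard_union_le _ _) (Nat.add_le_add_left ih _)

end TreeBalancedAux

/-- A finite tree on `m ≥ 2` vertices with maximum degree 3 has an
edge whose deletion leaves two connected components, each with at most
`⌊(2m+1)/3⌋` vertices. -/
theorem tree_balanced_edge_cut {V : Type*} [Fintype V] [DecidableEq V]
    (G : SimpleGraph V) [DecidableRel G.Adj]
    (hT : G.IsTree) (hdeg : ∀ v : V, G.degree v ≤ 3)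
    (m : ℕ) (hm : Fintype.card V = m) (hm2 : 2 ≤ m) :
    ∃ u v : V, G.Adj u v ∧
      ∀ w : V,
        ((G.deleteEdges {s(u, v)}).connectedComponentMk w).supp.ncard
          ≤ (2 * m + 1) / 3 := by
  classical
  subst hm
  have hconn := hT.isConnected
  obtain ⟨a, b, hab⟩ : ∃ a b : V, G.Adj a b := by
    obtain ⟨a, b, hne⟩ := Fintype.exists_pair_of_one_lt_card (show 1 < Fintype.card V by omega)
    obtain ⟨p⟩ := hconn a b
    cases p with
    | nil => exact absurd rfl hne
    | cons h _ => exact ⟨_, _, h⟩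
  obtain ⟨e, he_mem, he_min⟩ := Finset.exists_min_image
    ((Finset.univ : Finset (V × V)).filter fun e => G.Adj e.1 e.2)
    (fun e => max (TreeBalancedAux.sz G e.1 e.2) (TreeBalancedAux.sz G e.2 e.1))
    ⟨(a, b), by simp [hab]⟩
  rw [Finset.mem_filter] at he_mem
  have hmin : ∀ c d : V, G.Adj c d →
      max (TreeBalancedAux.sz G e.1 e.2) (TreeBalancedAux.sz G e.2 e.1) ≤
        max (TreeBalancedAux.sz G c d) (TreeBalancedAux.sz G d c) :=
    fun c d h => he_min (c, d) (by simp [h])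
  obtain ⟨u, v, huv, hge, hmin'⟩ : ∃ u v : V, G.Adj u v ∧
      TreeBalancedAux.sz G v u ≤ TreeBalancedAux.sz G u v ∧
      ∀ c d : V, G.Adj c d → TreeBalancedAux.sz G u v ≤
        max (TreeBalancedAux.sz G c d) (TreeBalancedAux.sz G d c) := by
    rcases le_total (TreeBalancedAux.sz G e.1 e.2) (TreeBalancedAux.sz G e.2 e.1) with hle | hle
    · refine ⟨e.2, e.1, he_mem.2.symm, hle, fun c d h => ?_⟩
      have := hmin c d h
      rw [max_eq_right hle] at this
      exact this
    · refine ⟨e.1, e.2, he_mem.2, hle, fun c d h => ?_⟩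
      have := hmin c d h
      rw [max_eq_left hle] at this
      exact this
  have hsum := TreeBalancedAux.sz_add hT huv
  have hMB : TreeBalancedAux.sz G u v ≤ (2 * Fintype.card V + 1) / 3 := by
    by_contra hM'
    push_neg at hM'
    set s : Finset V := (G.neighborFinset v).erase u with hs
    have hu_mem : u ∈ G.neighborFinset v := by
      rw [mem_neighborFinset]; exact huv.symm
    have hdeg3 : (G.neighborFinset v).card ≤ 3 := hdeg v
    have hcard_s : s.card ≤ 2 := by
      rw [hs, Finset.card_erase_of_mem hu_mem]
      omega
    set supp_v := ((G.deleteEdges {s(u,v)}).connectedComponentMk v).supp with hsupp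
    have hcover : supp_v \ {v} ⊆
        ⋃ w ∈ s, ((G.deleteEdges {s(v,w)}).connectedComponentMk w).supp := by
      rintro x ⟨hx1, hx2⟩
      have hxv : x ≠ v := by simpa using hx2
      rw [hsupp, ConnectedComponent.mem_supp_iff, ConnectedComponent.eq] at hx1
      obtain ⟨w, hvw, hwu, hr⟩ := TreeBalancedAux.exists_neighbor hT huv hx1 hxv
      refine Set.mem_iUnion₂.mpr ⟨w, ?_, ?_⟩
      · exact Finset.mem_erase.mpr ⟨hwu, by rw [mem_neighborFinset]; exact hvw⟩
      · rw [ConnectedComponent.mem_supp_iff, ConnectedComponent.eq]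
        exact hr
    have hv_mem : v ∈ supp_v := (ConnectedComponent.mem_supp_iff _ _).mpr rfl
    have hdiff : (supp_v \ {v}).ncard + 1 = TreeBalancedAux.sz G u v :=
      Set.ncard_diff_singleton_add_one hv_mem (Set.toFinite _)
    have hle1 : (supp_v \ {v}).ncard ≤ ∑ w ∈ s, TreeBalancedAux.sz G v w :=
      le_trans (Set.ncard_le_ncard hcover (Set.toFinite _))
        (TreeBalancedAux.ncard_biUnion_le s _)
    have hs_ne : s.Nonempty := by
      by_contra h
      rw [Finset.not_nonempty_iff_eq_empty] at h
      rw [h, Finset.sum_empty] at hle1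
      omega
    obtain ⟨w, hw_mem, hw_max⟩ :=
      Finset.exists_max_image s (fun w => TreeBalancedAux.sz G v w) hs_ne
    have hw_adj : G.Adj v w := by
      have := Finset.mem_of_mem_erase hw_mem
      rwa [mem_neighborFinset] at this
    have hw_ne : w ≠ u := Finset.ne_of_mem_erase hw_mem
    have hsum_le : ∑ x ∈ s, TreeBalancedAux.sz G v x ≤ s.card * TreeBalancedAux.sz G v w := by
      simpa using Finset.sum_le_card_nsmul s _ _ (fun x hx => hw_max x hx)
    have hsum_le2 : ∑ x ∈ s, TreeBalancedAux.sz G v x ≤ 2 * TreeBalancedAux.sz G v w :=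
      le_trans hsum_le (Nat.mul_le_mul_right _ hcard_s)
    have hshr : ((G.deleteEdges {s(v,w)}).connectedComponentMk w).supp ⊆ supp_v \ {v} := by
      intro x hx
      rw [ConnectedComponent.mem_supp_iff, ConnectedComponent.eq] at hx
      obtain ⟨h1, h2⟩ := TreeBalancedAux.supp_shrink hT huv hw_adj hw_ne hx
      refine ⟨?_, by simpa using h2⟩
      rw [hsupp, ConnectedComponent.mem_supp_iff, ConnectedComponent.eq]
      exact h1
    have hszw : TreeBalancedAux.sz G v w ≤ (supp_v \ {v}).ncard :=
      Set.ncard_le_ncard hshr (Set.toFinite _)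
    have hsum2 := TreeBalancedAux.sz_add hT hw_adj
    have hmin2 := hmin' v w hw_adj
    rw [le_max_iff] at hmin2
    omega
  refine ⟨u, v, huv, fun w => ?_⟩
  rcases TreeBalancedAux.reach_cover hconn u v w with h | h
  · rw [ConnectedComponent.sound h]
    have hgoal : ((G.deleteEdges {s(u,v)}).connectedComponentMk u).supp.ncard =
        TreeBalancedAux.sz G v u := by
      unfold TreeBalancedAux.sz
      rw [Sym2.eq_swap]
    rw [hgoal]
    exact le_trans hge hMB
  · rw [ConnectedComponent.sound h]
    exact hMB
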